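/- Let $\ell$ be a field of characteristic $\neq 2$, let $a_1, \ldots, a_i \in \ell^\times$ with $-a_1 \cdots a_i$ not a square in $\ell$, and consider the irreducible polynomial $\pi = x^2 + a_1 \cdots a_i \in \ell[x]$. Then any quadratic form over $\ell(x)$ containing the subform $\langle a_1, a_2 \cdots a_i \rangle$ is isotropic over the $\pi$-adic completion $\ell(x)_\pi$. -/

import Mathlib

open IsDedekindDomain
open scoped Multiplicative
local notation "ℤₘ₀" => WithZero (Multiplicative ℤ)

/-- A diagonal quadratic form (given by its diagonal entries `d`) is isotropic. -/
def Isotropic {F : Type*} [Field F] {ι : Type*} [Fintype ι] (d : ι → F) : Prop :=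
  ∃ w : ι → F, w ≠ 0 ∧ ∑ i, d i * w i ^ 2 = 0

lemma exists_pow_lt_zm0 (x y : ℤₘ₀) (hx : x < 1) (hy : y ≠ 0) :
    ∃ N : ℕ, x ^ N < y := by
  rcases eq_or_ne x 0 with rfl | hx0
  · exact ⟨1, by simpa [pow_one] using zero_lt_iff.mpr hy⟩
  obtain ⟨a, rfl⟩ := WithZero.ne_zero_iff_exists.mp hx0
  obtain ⟨b, rfl⟩ := WithZero.ne_zero_iff_exists.mp hy
  rw [← WithZero.coe_one, WithZero.coe_lt_coe] at hx
  refine ⟨(Multiplicative.toAdd b).natAbs + 1, ?_⟩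
  rw [← WithZero.coe_pow, WithZero.coe_lt_coe]
  set N : ℕ := (Multiplicative.toAdd b).natAbs + 1 with hN
  have ha : Multiplicative.toAdd a ≤ -1 := by
    have : Multiplicative.toAdd a < Multiplicative.toAdd (1 : Multiplicative ℤ) :=
      Multiplicative.toAdd_lt.mpr hx
    have h' : Multiplicative.toAdd a < 0 := by simpa using this
    omega
  have key : Multiplicative.toAdd (a ^ N) < Multiplicative.toAdd b := by
    rw [toAdd_pow]
    have h1 : (N : ℤ) • Multiplicative.toAdd a ≤ (N : ℤ) * (-1) := by
      rw [smul_eq_mul]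
      exact mul_le_mul_of_nonneg_left ha (by positivity)
    have h2 : ((N : ℤ)) * (-1) < Multiplicative.toAdd b := by
      omega
    calc (N • Multiplicative.toAdd a : ℤ) = (N : ℤ) • Multiplicative.toAdd a := by
          simp
      _ ≤ (N : ℤ) * (-1) := h1
      _ < Multiplicative.toAdd b := h2
  exact Multiplicative.toAdd_lt.mp key

/-- Newton iteration for a square root of `-c` starting at `t`. -/
noncomputable def newtonSeq {L : Type*} [Field L] (c t : L) : ℕ → L
  | 0 => t
  | (n + 1) => newtonSeq c t n - ((newtonSeq c t n) ^ 2 + c) / (2 * newtonSeq c t n)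

/-- Hensel-style square root in a complete `ℤₘ₀`-valued field. -/
lemma exists_sqrt_of_complete {L : Type*} [Field L] [Valued L ℤₘ₀] [CompleteSpace L]
    (c t : L) (h2 : Valued.v (2 : L) = 1) (ht : Valued.v t = 1)
    (hlt : Valued.v (t ^ 2 + c) < 1) : ∃ s : L, s ^ 2 = -c := by
  set γ : ℤₘ₀ := Valued.v (t ^ 2 + c) with hγ
  have h2ne : (2 : L) ≠ 0 := by
    intro h; rw [h, map_zero] at h2; exact zero_ne_one h2
  set u : ℕ → L := newtonSeq c t with hu
  have hu0 : u 0 = t := rfl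
  have hus : ∀ k, u (k + 1) = u k - (u k ^ 2 + c) / (2 * u k) := fun _ => rfl
  -- main invariant
  have key : ∀ k, Valued.v (u k) = 1 ∧ Valued.v (u k ^ 2 + c) ≤ γ ^ 2 ^ k := by
    intro k
    induction k with
    | zero => exact ⟨ht, by simp [hu0, hγ]⟩
    | succ k ih =>
      obtain ⟨h1, hle⟩ := ih
      have hne : u k ≠ 0 := by
        intro h; rw [h, map_zero] at h1; exact zero_ne_one h1
      have hvd : Valued.v ((u k ^ 2 + c) / (2 * u k)) = Valued.v (u k ^ 2 + c) := by
        rw [map_div₀, map_mul, h2, h1, one_mul, div_one]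
      have hpowlt : γ ^ 2 ^ k < 1 := by
        calc γ ^ 2 ^ k ≤ γ ^ 1 :=
              pow_le_pow_right_of_le_one' hlt.le Nat.one_le_two_pow
          _ = γ := pow_one γ
          _ < 1 := hlt
      have hid : u (k + 1) ^ 2 + c = ((u k ^ 2 + c) / (2 * u k)) ^ 2 := by
        rw [hus]; field_simp; ring
      constructor
      · rw [hus]
        rw [Valuation.map_sub_eq_of_lt_left]
        · exact h1
        · rw [hvd, h1]
          exact lt_of_le_of_lt hle hpowlt
      · rw [hid, map_pow, hvd]
        calc Valued.v (u k ^ 2 + c) ^ 2 ≤ (γ ^ 2 ^ k) ^ 2 := pow_le_pow_left' hle 2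
          _ = γ ^ 2 ^ (k + 1) := by rw [← pow_mul, pow_succ]
  -- difference bound
  have hdiff : ∀ k, Valued.v (u (k + 1) - u k) ≤ γ ^ 2 ^ k := by
    intro k
    have h1 := (key k).1
    have hvd : Valued.v ((u k ^ 2 + c) / (2 * u k)) = Valued.v (u k ^ 2 + c) := by
      rw [map_div₀, map_mul, h2, h1, one_mul, div_one]
    have : u (k + 1) - u k = -((u k ^ 2 + c) / (2 * u k)) := by rw [hus]; ring
    rw [this, Valuation.map_neg, hvd]
    exact (key k).2
  have hdiff' : ∀ k l, k ≤ l → Valued.v (u l - u k) ≤ γ ^ 2 ^ k := by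
    intro k l hkl
    induction l, hkl using Nat.le_induction with
    | base => simp
    | succ l hkl ih =>
      have : u (l + 1) - u k = (u (l + 1) - u l) + (u l - u k) := by ring
      rw [this]
      refine le_trans (Valued.v.map_add _ _) (max_le ?_ ih)
      exact le_trans (hdiff l)
        (pow_le_pow_right_of_le_one' hlt.le
          (Nat.pow_le_pow_right (by norm_num) hkl))
  have hγle : γ ≤ 1 := hlt.le
  -- Cauchy
  have hcau : CauchySeq u := by
    rw [(Valued.hasBasis_uniformity L ℤₘ₀).cauchySeq_iff]
    intro δ _
    obtain ⟨N, hN⟩ := exists_pow_lt_zm0 γ (MonoidWithZeroHom.ValueGroup₀.embedding δ.1) hlt (by simp)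
    refine ⟨N, fun k hk l hl => ?_⟩
    have main : ∀ p q : ℕ, N ≤ p → p ≤ q → Valued.v (u q - u p) < (MonoidWithZeroHom.ValueGroup₀.embedding δ.1) := by
      intro p q hp hpq
      refine lt_of_le_of_lt (le_trans (hdiff' p q hpq) ?_) hN
      exact pow_le_pow_right_of_le_one' hγle
        (le_trans hp (le_of_lt (Nat.lt_two_pow_self)))
    rcases le_total k l with h | h
    · exact (Valued.v.restrict_lt_iff_lt_embedding).mpr (main k l hk h)
    · have := main l k hl h
      rw [show u k - u l = -(u l - u k) by ring, Valuation.map_neg] at this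
      exact (Valued.v.restrict_lt_iff_lt_embedding).mpr this
  obtain ⟨s, hsl⟩ := cauchySeq_tendsto_of_complete hcau
  refine ⟨s, ?_⟩
  have hcont : Filter.Tendsto (fun k => u k ^ 2 + c) Filter.atTop (nhds (s ^ 2 + c)) :=
    (hsl.pow 2).add tendsto_const_nhds
  have hzero : Filter.Tendsto (fun k => u k ^ 2 + c) Filter.atTop (nhds (0 : L)) := by
    rw [(Valued.hasBasis_nhds_zero L ℤₘ₀).tendsto_right_iff]
    intro δ _
    obtain ⟨N, hN⟩ := exists_pow_lt_zm0 γ (MonoidWithZeroHom.ValueGroup₀.embedding δ.1) hlt (by simp)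
    filter_upwards [Filter.eventually_ge_atTop N] with k hk
    have : Valued.v (u k ^ 2 + c) ≤ γ ^ N :=
      le_trans (key k).2
        (pow_le_pow_right_of_le_one' hγle
          (le_trans hk (le_of_lt (Nat.lt_two_pow_self))))
    exact (Valued.v.restrict_lt_iff_lt_embedding).mpr (lt_of_le_of_lt this hN)
  have : s ^ 2 + c = 0 := tendsto_nhds_unique hcont hzero
  exact eq_neg_of_add_eq_zero_left this

set_option maxHeartbeats 1000000 in
set_option synthInstance.maxHeartbeats 200000 in
theorem subform_isotropic_over_pi_adic_completion
    {ℓ : Type*} [Field ℓ] (hl : (2 : ℓ) ≠ 0) (m : ℕ) (hm : 0 < m)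
    (a : Fin m → ℓ) (ha : ∀ j, a j ≠ 0)
    (hns : ∀ c : ℓ, c ^ 2 ≠ -∏ j, a j)
    (v : HeightOneSpectrum (Polynomial ℓ))
    (hv : v.asIdeal = Ideal.span {Polynomial.X ^ 2 + Polynomial.C (∏ j, a j)})
    {n : ℕ} (ρ : Fin n → RatFunc ℓ) :
    Isotropic (fun idx : Fin 2 ⊕ Fin n =>
      algebraMap (RatFunc ℓ) (v.adicCompletion (RatFunc ℓ))
        (Sum.elim
          ![RatFunc.C (a ⟨0, hm⟩),
            RatFunc.C (∏ j ∈ Finset.univ.filter (fun j => j ≠ (⟨0, hm⟩ : Fin m)), a j)]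
          ρ idx)) := by
  classical
  set k : ℓ := ∏ j, a j with hk
  have hk0 : k ≠ 0 := Finset.prod_ne_zero_iff.mpr fun j _ => ha j
  set π : Polynomial ℓ := Polynomial.X ^ 2 + Polynomial.C k with hπ
  have hπdeg : π.natDegree = 2 := Polynomial.natDegree_X_pow_add_C
  -- `intValuation` of nonzero polynomials of degree `< 2` is `1`
  have hval1 : ∀ q : Polynomial ℓ, q ≠ 0 → q.natDegree < 2 → v.intValuation q = 1 := by
    intro q hq hdeg
    refine le_antisymm (v.intValuation_le_one q) (not_lt.mp fun hlt1 => ?_)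
    have hdvd : v.asIdeal ∣ Ideal.span {q} :=
      (v.intValuation_lt_one_iff_dvd q).mp hlt1
    rw [hv] at hdvd
    have hpq : π ∣ q :=
      Ideal.span_singleton_le_span_singleton.mp (Ideal.le_of_dvd hdvd)
    have := Polynomial.natDegree_le_of_dvd hpq hq
    omega
  -- valuation on the completion of an integral element
  have hvalL : ∀ p : Polynomial ℓ,
      Valued.v (algebraMap (RatFunc ℓ) (v.adicCompletion (RatFunc ℓ))
        (algebraMap (Polynomial ℓ) (RatFunc ℓ) p)) = v.intValuation p := by
    intro p
    rw [show algebraMap (RatFunc ℓ) (v.adicCompletion (RatFunc ℓ))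
          (algebraMap (Polynomial ℓ) (RatFunc ℓ) p)
        = ((algebraMap (Polynomial ℓ) (RatFunc ℓ) p : RatFunc ℓ) :
            v.adicCompletion (RatFunc ℓ)) from rfl]
    rw [IsDedekindDomain.HeightOneSpectrum.valuedAdicCompletion_eq_valuation']
    exact v.valuation_of_algebraMap p
  -- valuation of 2
  have h2poly : (2 : Polynomial ℓ) ≠ 0 := by
    intro h
    apply hl
    have := congrArg (Polynomial.eval 0) h
    simpa using this
  have h2 : Valued.v (2 : v.adicCompletion (RatFunc ℓ)) = 1 := by
    have h : (2 : v.adicCompletion (RatFunc ℓ)) =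
        algebraMap (RatFunc ℓ) (v.adicCompletion (RatFunc ℓ))
          (algebraMap (Polynomial ℓ) (RatFunc ℓ) 2) := by
      rw [map_ofNat, map_ofNat]
    rw [h, hvalL]
    exact hval1 2 h2poly (by simp)
  -- valuation of X
  set t : v.adicCompletion (RatFunc ℓ) :=
    algebraMap (RatFunc ℓ) (v.adicCompletion (RatFunc ℓ)) RatFunc.X with hts
  have ht : Valued.v t = 1 := by
    rw [hts, ← RatFunc.algebraMap_X, hvalL]
    exact hval1 Polynomial.X Polynomial.X_ne_zero (by simp)
  -- valuation of π in the completion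
  set cL : v.adicCompletion (RatFunc ℓ) :=
    algebraMap (RatFunc ℓ) (v.adicCompletion (RatFunc ℓ)) (RatFunc.C k) with hcs
  have hπL : t ^ 2 + cL =
      algebraMap (RatFunc ℓ) (v.adicCompletion (RatFunc ℓ))
        (algebraMap (Polynomial ℓ) (RatFunc ℓ) π) := by
    rw [hπ, map_add, map_add, map_pow, map_pow, RatFunc.algebraMap_X, RatFunc.algebraMap_C]
  have hlt : Valued.v (t ^ 2 + cL) < 1 := by
    rw [hπL, hvalL]
    exact (v.intValuation_lt_one_iff_dvd π).mpr (by rw [hv])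
  -- square root of `-cL`
  obtain ⟨s, hs⟩ := exists_sqrt_of_complete cL t h2 ht hlt
  -- the two diagonal coefficients
  set A : v.adicCompletion (RatFunc ℓ) :=
    algebraMap (RatFunc ℓ) (v.adicCompletion (RatFunc ℓ)) (RatFunc.C (a ⟨0, hm⟩)) with hAs
  set P : v.adicCompletion (RatFunc ℓ) :=
    algebraMap (RatFunc ℓ) (v.adicCompletion (RatFunc ℓ))
      (RatFunc.C (∏ j ∈ Finset.univ.filter (fun j => j ≠ (⟨0, hm⟩ : Fin m)), a j)) with hPs
  have hA1 : Valued.v A = 1 := by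
    rw [hAs, ← RatFunc.algebraMap_C, hvalL]
    exact hval1 _ (Polynomial.C_ne_zero.mpr (ha _)) (by simp)
  have hA0 : A ≠ 0 := by
    intro h
    rw [h, map_zero] at hA1
    exact zero_ne_one hA1
  have hsplit : a ⟨0, hm⟩ * (∏ j ∈ Finset.univ.filter (fun j => j ≠ (⟨0, hm⟩ : Fin m)), a j)
      = k := by
    rw [Finset.filter_ne']
    exact Finset.mul_prod_erase Finset.univ a (Finset.mem_univ _)
  have hAP : A * P = cL := by
    rw [hAs, hPs, hcs, ← map_mul, ← map_mul, hsplit]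
  -- the isotropic vector
  refine ⟨Sum.elim ![s / A, 1] 0, ?_, ?_⟩
  · intro h
    have := congrFun h (Sum.inl 1)
    simp at this
  · rw [Fintype.sum_sum_type]
    simp only [Sum.elim_inl, Sum.elim_inr, Pi.zero_apply, ne_eq, OfNat.ofNat_ne_zero,
      not_false_eq_true, zero_pow, mul_zero, Finset.sum_const_zero, add_zero]
    rw [Fin.sum_univ_two]
    simp only [Matrix.cons_val_zero, Matrix.cons_val_one, Matrix.head_cons]
    rw [← hAs, ← hPs, div_pow, hs, ← hAP]
    field_simp
    ring
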